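/- arXiv:2308.01288 — 6 statements merged into one kernel-verified Lean document; each statement's English description precedes it below -/
import Mathlib

section
/- Let a₁,…,a_{3m-2} be the entries of the bidiagonal factors L₁, L₂, U of a bidiagonal factorization T = L₁L₂U where L₁, L₂ are lower unitriangular m×m matrices with subdiagonal entries (a₂, a₅, …, a_{3m-4}) and (a₃, a₆, …, a_{3m-3}) respectively, and U is upper triangular with diagonal (a₁, a₄, …, a_{3m-2}) and superdiagonal entries all equal to 1. Then T is a tetradiagonal lower Hessenberg matrix with superdiagonal entries 1 and, for all valid indices, diagonal entries b₀ = a₁, b_{2n+1} = a_{6n+2}+a_{6n+3}+a_{6n+4}, b_{2n+2} = a_{6n+5}+a_{6n+6}+a_{6n+7}; first subdiagonal c₁ = a₁(a₂+a₃), c_{2n+2} = a_{6n+3}a_{6n+5} + a_{6n+4}(a_{6n+5}+a_{6n+6}), c_{2n+3} = a_{6n+6}a_{6n+8} + a_{6n+7}(a_{6n+8}+a_{6n+9}); second subdiagonal d_{2n+2} = a_{6n+1}a_{6n+3}a_{6n+5}, d_{2n+3} = a_{6n+4}a_{6n+6}a_{6n+8}. -/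
open Finset Matrix

lemma Lmul_apply {m : ℕ} (c : ℕ → ℝ) (L X : Matrix (Fin m) (Fin m) ℝ)
    (hL : ∀ i j : Fin m, L i j =
      if (i : ℕ) = j then 1 else if (i : ℕ) = (j : ℕ) + 1 then c (j : ℕ) else 0)
    (i j : Fin m) :
    (L * X) i j
      = X i j + if h : 0 < (i : ℕ) then
          c ((i : ℕ) - 1) * X ⟨(i : ℕ) - 1, lt_trans (Nat.sub_lt h one_pos) i.isLt⟩ j
        else 0 := by
  rw [Matrix.mul_apply]
  by_cases h : 0 < (i : ℕ)
  · rw [dif_pos h]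
    have hne : (⟨(i : ℕ) - 1, lt_trans (Nat.sub_lt h one_pos) i.isLt⟩ : Fin m) ≠ i := by
      intro he
      have := congrArg Fin.val he
      simp only [Fin.val_mk] at this
      omega
    rw [← Finset.sum_subset
        (Finset.subset_univ {(⟨(i : ℕ) - 1, lt_trans (Nat.sub_lt h one_pos) i.isLt⟩ : Fin m), i})]
    · rw [Finset.sum_pair hne, hL, hL]
      have h1 : ¬ ((i : ℕ) = ((⟨(i : ℕ) - 1, lt_trans (Nat.sub_lt h one_pos) i.isLt⟩ : Fin m) : ℕ)) := by
        simp only [Fin.val_mk]; omega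
      have h2 : (i : ℕ) = ((⟨(i : ℕ) - 1, lt_trans (Nat.sub_lt h one_pos) i.isLt⟩ : Fin m) : ℕ) + 1 := by
        simp only [Fin.val_mk]; omega
      rw [if_neg h1, if_pos h2, if_pos rfl]
      simp only [Fin.val_mk]
      ring
    · intro x _ hx
      simp only [Finset.mem_insert, Finset.mem_singleton] at hx
      push_neg at hx
      have hx1 : ¬ ((i : ℕ) = (x : ℕ)) := by
        intro he; exact hx.2 (Fin.ext he.symm)
      have hx2 : ¬ ((i : ℕ) = (x : ℕ) + 1) := by
        intro he
        apply hx.1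
        apply Fin.ext
        simp only [Fin.val_mk]; omega
      rw [hL, if_neg hx1, if_neg hx2, zero_mul]
  · rw [dif_neg h]
    rw [Finset.sum_eq_single i]
    · rw [hL, if_pos rfl, one_mul, add_zero]
    · intro x _ hx
      have hx1 : ¬ ((i : ℕ) = (x : ℕ)) := by
        intro he; exact hx (Fin.ext he).symm
      have hx2 : ¬ ((i : ℕ) = (x : ℕ) + 1) := by omega
      rw [hL, if_neg hx1, if_neg hx2, zero_mul]
    · simp

noncomputable def Fent (a : ℕ → ℝ) (i j : ℕ) : ℝ :=
  if j = i + 1 then 1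
  else if i = j then (if i = 0 then a 1 else a (3*i+1) + a (3*(i-1)+3) + a (3*(i-1)+2))
  else if i = j + 1 then
    a (3*(i-1)+3) * a (3*(i-1)+1)
      + a (3*(i-1)+2) * (a (3*(i-1)+1) + (if i - 1 = 0 then 0 else a (3*(i-1-1)+3)))
  else if i = j + 2 then a (3*(i-1)+2) * a (3*(i-1-1)+3) * a (3*(i-1-1)+1)
  else 0

set_option maxHeartbeats 1000000 in
lemma T_apply {m : ℕ} (a : ℕ → ℝ) (L1 L2 U : Matrix (Fin m) (Fin m) ℝ)
    (hL1 : ∀ i j : Fin m, L1 i j =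
      if (i : ℕ) = j then 1 else if (i : ℕ) = (j : ℕ) + 1 then a (3 * (j : ℕ) + 2) else 0)
    (hL2 : ∀ i j : Fin m, L2 i j =
      if (i : ℕ) = j then 1 else if (i : ℕ) = (j : ℕ) + 1 then a (3 * (j : ℕ) + 3) else 0)
    (hU : ∀ i j : Fin m, U i j =
      if (i : ℕ) = j then a (3 * (i : ℕ) + 1)
      else if (j : ℕ) = (i : ℕ) + 1 then 1 else 0)
    (i j : Fin m) :
    (L1 * L2 * U) i j = Fent a (i : ℕ) (j : ℕ) := by
  obtain ⟨i, hi⟩ := i; obtain ⟨j, hj⟩ := j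
  rw [Matrix.mul_assoc]
  rw [Lmul_apply (fun k => a (3 * k + 2)) L1 (L2 * U) hL1]
  simp only [Lmul_apply (fun k => a (3 * k + 3)) L2 U hL2]
  simp only [hU, Fent, Fin.val_mk]
  rcases Nat.lt_or_ge i 1 with h0 | h0
  · obtain rfl : i = 0 := by omega
    rw [dif_neg (by omega), dif_neg (by omega)]
    simp only [add_zero]
    split_ifs <;> first | (exfalso; omega) | (exact (‹False›).elim) | rfl | norm_num
  · rw [dif_pos (by omega), dif_pos (by omega)]
    by_cases hji : j = i + 1
    · split_ifs <;> first | (exfalso; omega) | (exact (‹False›).elim) | ring1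
    · by_cases hij : i = j
      · split_ifs <;> first | (exfalso; omega) | (exact (‹False›).elim) | ring1
      · by_cases hij1 : i = j + 1
        · split_ifs <;> first | (exfalso; omega) | (exact (‹False›).elim) | ring1
        · by_cases hij2 : i = j + 2
          · split_ifs <;> first | (exfalso; omega) | (exact (‹False›).elim) | ring1
          · split_ifs <;> first | (exfalso; omega) | (exact (‹False›).elim) | ring1

lemma Fent_super (a : ℕ → ℝ) (i j : ℕ) (h : j = i + 1) : Fent a i j = 1 := by
  unfold Fent; rw [if_pos h]

lemma Fent_zero (a : ℕ → ℝ) (i j : ℕ) (h : i + 1 < j ∨ j + 2 < i) : Fent a i j = 0 := by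
  unfold Fent
  rw [if_neg (by omega), if_neg (by omega), if_neg (by omega), if_neg (by omega)]

lemma Fent_diag0 (a : ℕ → ℝ) : Fent a 0 0 = a 1 := by
  unfold Fent; rw [if_neg (by omega), if_pos rfl, if_pos rfl]

lemma Fent_diag (a : ℕ → ℝ) (i : ℕ) (h : 0 < i) :
    Fent a i i = a (3*i+1) + a (3*(i-1)+3) + a (3*(i-1)+2) := by
  unfold Fent; rw [if_neg (by omega), if_pos rfl, if_neg (by omega)]

lemma Fent_sub (a : ℕ → ℝ) (i j : ℕ) (h : i = j + 1) :
    Fent a i j = a (3*(i-1)+3) * a (3*(i-1)+1)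
      + a (3*(i-1)+2) * (a (3*(i-1)+1) + (if i - 1 = 0 then 0 else a (3*(i-1-1)+3))) := by
  unfold Fent; rw [if_neg (by omega), if_neg (by omega), if_pos h]

lemma Fent_sub2 (a : ℕ → ℝ) (i j : ℕ) (h : i = j + 2) :
    Fent a i j = a (3*(i-1)+2) * a (3*(i-1-1)+3) * a (3*(i-1-1)+1) := by
  unfold Fent
  rw [if_neg (by omega), if_neg (by omega), if_neg (by omega), if_pos h]

theorem bidiagonal_factorization_structure (m : ℕ) (hm : 1 ≤ m) (a : ℕ → ℝ) :
    let L1 : Matrix (Fin m) (Fin m) ℝ := fun i j =>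
      if (i : ℕ) = j then 1 else if (i : ℕ) = (j : ℕ) + 1 then a (3 * (j : ℕ) + 2) else 0
    let L2 : Matrix (Fin m) (Fin m) ℝ := fun i j =>
      if (i : ℕ) = j then 1 else if (i : ℕ) = (j : ℕ) + 1 then a (3 * (j : ℕ) + 3) else 0
    let U : Matrix (Fin m) (Fin m) ℝ := fun i j =>
      if (i : ℕ) = j then a (3 * (i : ℕ) + 1)
      else if (j : ℕ) = (i : ℕ) + 1 then 1 else 0
    let T : Matrix (Fin m) (Fin m) ℝ := L1 * L2 * U
    -- superdiagonal entries are 1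
    (∀ i j : Fin m, (j : ℕ) = (i : ℕ) + 1 → T i j = 1) ∧
    -- tetradiagonal lower Hessenberg: zero outside the band
    (∀ i j : Fin m, (i : ℕ) + 1 < (j : ℕ) ∨ (j : ℕ) + 2 < (i : ℕ) → T i j = 0) ∧
    -- diagonal entries
    (∀ h : 0 < m, T ⟨0, h⟩ ⟨0, h⟩ = a 1) ∧
    (∀ n : ℕ, ∀ h : 2 * n + 1 < m,
      T ⟨2 * n + 1, h⟩ ⟨2 * n + 1, h⟩ = a (6 * n + 2) + a (6 * n + 3) + a (6 * n + 4)) ∧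
    (∀ n : ℕ, ∀ h : 2 * n + 2 < m,
      T ⟨2 * n + 2, h⟩ ⟨2 * n + 2, h⟩ = a (6 * n + 5) + a (6 * n + 6) + a (6 * n + 7)) ∧
    -- first subdiagonal entries
    (∀ h : 1 < m, T ⟨1, h⟩ ⟨0, Nat.lt_of_succ_lt h⟩ = a 1 * (a 2 + a 3)) ∧
    (∀ n : ℕ, ∀ h : 2 * n + 2 < m,
      T ⟨2 * n + 2, h⟩ ⟨2 * n + 1, Nat.lt_of_succ_lt h⟩
        = a (6 * n + 3) * a (6 * n + 5) + a (6 * n + 4) * (a (6 * n + 5) + a (6 * n + 6))) ∧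
    (∀ n : ℕ, ∀ h : 2 * n + 3 < m,
      T ⟨2 * n + 3, h⟩ ⟨2 * n + 2, Nat.lt_of_succ_lt h⟩
        = a (6 * n + 6) * a (6 * n + 8) + a (6 * n + 7) * (a (6 * n + 8) + a (6 * n + 9))) ∧
    -- second subdiagonal entries
    (∀ n : ℕ, ∀ h : 2 * n + 2 < m,
      T ⟨2 * n + 2, h⟩ ⟨2 * n, by omega⟩ = a (6 * n + 1) * a (6 * n + 3) * a (6 * n + 5)) ∧
    (∀ n : ℕ, ∀ h : 2 * n + 3 < m,
      T ⟨2 * n + 3, h⟩ ⟨2 * n + 1, by omega⟩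
        = a (6 * n + 4) * a (6 * n + 6) * a (6 * n + 8)) := by
  intro L1 L2 U T
  have hT : ∀ i j : Fin m, T i j = Fent a (i : ℕ) (j : ℕ) :=
    fun i j => T_apply a L1 L2 U (fun _ _ => rfl) (fun _ _ => rfl) (fun _ _ => rfl) i j
  refine ⟨?_, ?_, ?_, ?_, ?_, ?_, ?_, ?_, ?_, ?_⟩
  · intro i j h
    rw [hT, Fent_super a _ _ h]
  · intro i j h
    rw [hT, Fent_zero a _ _ h]
  · intro h
    rw [hT, Fent_diag0]
  · intro n h
    rw [hT, Fent_diag a (2*n+1) (by omega)]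
    rw [show 3*(2*n+1)+1 = 6*n+4 by omega, show 2*n+1-1 = 2*n by omega,
      show 3*(2*n)+3 = 6*n+3 by omega, show 3*(2*n)+2 = 6*n+2 by omega]
    ring
  · intro n h
    rw [hT, Fent_diag a (2*n+2) (by omega)]
    rw [show 3*(2*n+2)+1 = 6*n+7 by omega, show 2*n+2-1 = 2*n+1 by omega,
      show 3*(2*n+1)+3 = 6*n+6 by omega, show 3*(2*n+1)+2 = 6*n+5 by omega]
    ring
  · intro h
    rw [hT, Fent_sub a 1 0 rfl]
    norm_num
    ring
  · intro n h
    rw [hT, Fent_sub a (2*n+2) (2*n+1) rfl]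
    rw [show 2*n+2-1 = 2*n+1 by omega, if_neg (by omega),
      show 3*(2*n+1)+3 = 6*n+6 by omega, show 3*(2*n+1)+1 = 6*n+4 by omega,
      show 3*(2*n+1)+2 = 6*n+5 by omega, show 2*n+1-1 = 2*n by omega,
      show 3*(2*n)+3 = 6*n+3 by omega]
    ring
  · intro n h
    rw [hT, Fent_sub a (2*n+3) (2*n+2) rfl]
    rw [show 2*n+3-1 = 2*n+2 by omega, if_neg (by omega),
      show 3*(2*n+2)+3 = 6*n+9 by omega, show 3*(2*n+2)+1 = 6*n+7 by omega,
      show 3*(2*n+2)+2 = 6*n+8 by omega, show 2*n+2-1 = 2*n+1 by omega,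
      show 3*(2*n+1)+3 = 6*n+6 by omega]
    ring
  · intro n h
    rw [hT, Fent_sub2 a (2*n+2) (2*n) rfl]
    rw [show 2*n+2-1 = 2*n+1 by omega, show 2*n+1-1 = 2*n by omega,
      show 3*(2*n+1)+2 = 6*n+5 by omega, show 3*(2*n)+3 = 6*n+3 by omega,
      show 3*(2*n)+1 = 6*n+1 by omega]
    ring
  · intro n h
    rw [hT, Fent_sub2 a (2*n+3) (2*n+1) rfl]
    rw [show 2*n+3-1 = 2*n+2 by omega, show 2*n+2-1 = 2*n+1 by omega,
      show 3*(2*n+2)+2 = 6*n+8 by omega, show 3*(2*n+1)+3 = 6*n+6 by omega,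
      show 3*(2*n+1)+1 = 6*n+4 by omega]
    ring
end

section
/- For all n ∈ ℕ and real b₁, b₂ with the relevant hypergeometric values nonzero, the multiple Charlier bidiagonal entries satisfy the diagonal sum identity a_{6n+2} + a_{6n+3} + a_{6n+4} = 2n+1+b₂, where a_{6n+2} = ((n)ₙ(b₂-b₁)/(n+1)ₙ)·G(n,2n-1)/G(n,2n), a_{6n+3} = (2n+1)·G(n+1,2n+1)/G(n,2n), a_{6n+4} = b₂, with G(p,q) := ₁F₁(-p; -q; b₁-b₂), (x)ₖ the Pochhammer symbol, and (n)ₙ/(n+1)ₙ = n/(2n) = 1/2 for n ≥ 1 (interpret (0)₀/(1)₀ = 1 for n = 0). -/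
open Finset

/-- Pochhammer symbol `(x)_k = x (x+1) ⋯ (x+k-1)` for a real `x`. -/
noncomputable def poch (x : ℝ) (k : ℕ) : ℝ := ∏ i ∈ Finset.range k, (x + i)

/-- Terminating confluent hypergeometric sum `₁F₁(-p; -q; z)`. -/
noncomputable def F11 (p : ℕ) (q z : ℝ) : ℝ :=
  ∑ k ∈ Finset.range (p + 1), poch (-(p : ℝ)) k * z ^ k / (poch (-q) k * (Nat.factorial k))

lemma poch_zero (x : ℝ) : poch x 0 = 1 := by simp [poch]

lemma poch_succ (x : ℝ) (k : ℕ) : poch x (k+1) = poch x k * (x + k) := by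
  simp [poch, Finset.prod_range_succ]

lemma poch_succ' (x : ℝ) (k : ℕ) : poch x (k+1) = x * poch (x+1) k := by
  simp [poch, Finset.prod_range_succ']
  rw [mul_comm]
  congr 1
  apply Finset.prod_congr rfl
  intro i _
  push_cast
  ring

lemma poch_ne_zero (x : ℝ) (k : ℕ) (h : x + k ≤ 0) : poch x k ≠ 0 := by
  apply Finset.prod_ne_zero_iff.2
  intro i hi
  have hi' : (i:ℝ) + 1 ≤ k := by exact_mod_cast Finset.mem_range.1 hi
  nlinarith

lemma poch_pos (x : ℝ) (k : ℕ) (h : 0 < x) : 0 < poch x k := by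
  apply Finset.prod_pos
  intro i _
  positivity

lemma termwise (n m : ℕ) (hn : 1 ≤ n) (hm : m ≤ n) (z : ℝ) :
    -(z/2) * (poch (-(n:ℝ)) m * z^m / (poch (-(2*(n:ℝ)-1)) m * (Nat.factorial m)))
      + (2*(n:ℝ)+1) * (poch (-((n:ℝ)+1)) (m+1) * z^(m+1) / (poch (-(2*(n:ℝ)+1)) (m+1) * (Nat.factorial (m+1))))
    = (2*(n:ℝ)+1) * (poch (-(n:ℝ)) (m+1) * z^(m+1) / (poch (-(2*(n:ℝ))) (m+1) * (Nat.factorial (m+1)))) := by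
  have hn1 : (1:ℝ) ≤ (n:ℝ) := by exact_mod_cast hn
  have hm1 : (m:ℝ) ≤ (n:ℝ) := by exact_mod_cast hm
  have hB : poch (-(2*(n:ℝ)-1)) m ≠ 0 := poch_ne_zero _ _ (by linarith)
  have hC : poch (-(2*(n:ℝ))) m ≠ 0 := poch_ne_zero _ _ (by linarith)
  have e1 : poch (-((n:ℝ)+1)) (m+1) = -((n:ℝ)+1) * poch (-(n:ℝ)) m := by
    rw [poch_succ']; ring_nf
  have e2 : poch (-(2*(n:ℝ)+1)) (m+1) = -(2*(n:ℝ)+1) * poch (-(2*(n:ℝ))) m := by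
    rw [poch_succ']; ring_nf
  have e3 : poch (-(n:ℝ)) (m+1) = poch (-(n:ℝ)) m * (-(n:ℝ) + m) := poch_succ _ _
  have e4 : poch (-(2*(n:ℝ))) (m+1) = poch (-(2*(n:ℝ))) m * (-(2*(n:ℝ)) + m) := poch_succ _ _
  have e5 : poch (-(2*(n:ℝ))) (m+1) = -(2*(n:ℝ)) * poch (-(2*(n:ℝ)-1)) m := by
    rw [poch_succ']; ring_nf
  have hBC : poch (-(2*(n:ℝ))) m * (-(2*(n:ℝ)) + m) = -(2*(n:ℝ)) * poch (-(2*(n:ℝ)-1)) m := by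
    rw [← e4, e5]
  have hfac : ((Nat.factorial m : ℝ)) ≠ 0 := by positivity
  have hfac1 : ((Nat.factorial (m+1) : ℝ)) ≠ 0 := by positivity
  have hmn : -(2*(n:ℝ)) + m ≠ 0 := by intro h; nlinarith
  have hfs : (Nat.factorial (m+1) : ℝ) = (m+1) * (Nat.factorial m : ℝ) := by
    push_cast [Nat.factorial_succ]; ring
  have h2n : (-(2*(n:ℝ))) ≠ 0 := by intro h; nlinarith
  rw [e1, e2, e3, e4, hfs]
  set A := poch (-(n:ℝ)) m with hA
  set B := poch (-(2*(n:ℝ)-1)) m with hBdef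
  set C := poch (-(2*(n:ℝ))) m with hCdef
  have hBeq : B = C * (-(2*(n:ℝ)) + m) / (-(2*(n:ℝ))) := by
    rw [eq_div_iff h2n]
    linear_combination -hBC
  have h2n1 : ((2*(n:ℝ)+1)) ≠ 0 := by positivity
  have hm1' : ((m:ℝ)+1) ≠ 0 := by positivity
  have hp : B * (Nat.factorial m : ℝ) ≠ 0 := mul_ne_zero hB hfac
  have hq : (-(2*(n:ℝ)+1) * C) * (((m:ℝ)+1) * (Nat.factorial m : ℝ)) ≠ 0 := by
    apply mul_ne_zero (mul_ne_zero (neg_ne_zero.2 h2n1) hC) (mul_ne_zero hm1' hfac)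
  have hr : (C * (-(2*(n:ℝ)) + m)) * (((m:ℝ)+1) * (Nat.factorial m : ℝ)) ≠ 0 := by
    apply mul_ne_zero (mul_ne_zero hC hmn) (mul_ne_zero hm1' hfac)
  simp only [mul_div_assoc']
  rw [div_add_div _ _ hp hq, div_eq_div_iff (mul_ne_zero hp hq) hr]
  linear_combination (z * z^m * A * ((Nat.factorial m : ℝ))^2 * C * (((m:ℝ)+1))^2 * (2*(n:ℝ)+1) / 2) * hBC

lemma key (n : ℕ) (hn : 1 ≤ n) (z : ℝ) :
    -(z/2) * F11 n (2*(n:ℝ)-1) z + (2*(n:ℝ)+1) * F11 (n+1) (2*(n:ℝ)+1) z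
      = (2*(n:ℝ)+1) * F11 n (2*(n:ℝ)) z := by
  have hpz : poch (-(n:ℝ)) (n+1) = 0 := by
    apply Finset.prod_eq_zero (Finset.self_mem_range_succ n)
    simp
  have hext : F11 n (2*(n:ℝ)) z
      = ∑ k ∈ Finset.range (n+1+1), poch (-(n:ℝ)) k * z ^ k / (poch (-(2*(n:ℝ))) k * (Nat.factorial k)) := by
    rw [F11]
    conv_rhs => rw [Finset.sum_range_succ]
    rw [hpz]
    simp
  have hF2 : F11 (n+1) (2*(n:ℝ)+1) z
      = ∑ k ∈ Finset.range (n+1+1), poch (-((n:ℝ)+1)) k * z ^ k / (poch (-(2*(n:ℝ)+1)) k * (Nat.factorial k)) := by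
    rw [F11]
    push_cast
    rfl
  rw [hext, hF2, F11,
    Finset.sum_range_succ' (fun k => poch (-((n:ℝ)+1)) k * z ^ k / (poch (-(2*(n:ℝ)+1)) k * (Nat.factorial k))) (n+1),
    Finset.sum_range_succ' (fun k => poch (-(n:ℝ)) k * z ^ k / (poch (-(2*(n:ℝ))) k * (Nat.factorial k))) (n+1)]
  simp only [poch_zero, pow_zero, Nat.factorial_zero, Nat.cast_one, mul_one, one_mul, one_div, inv_one, div_one]
  rw [mul_add, mul_add, Finset.mul_sum, Finset.mul_sum, Finset.mul_sum, ← add_assoc,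
    ← Finset.sum_add_distrib]
  congr 1
  exact Finset.sum_congr rfl
    (fun m hm => termwise n m hn (Nat.lt_succ_iff.mp (Finset.mem_range.1 hm)) z)

theorem charlier_diagonal_sum (n : ℕ) (b₁ b₂ : ℝ)
    (hG0 : F11 n (2 * (n : ℝ) - 1) (b₁ - b₂) ≠ 0)
    (hG1 : F11 n (2 * (n : ℝ)) (b₁ - b₂) ≠ 0)
    (hG2 : F11 (n + 1) (2 * (n : ℝ) + 1) (b₁ - b₂) ≠ 0) :
    poch (n : ℝ) n * (b₂ - b₁) / poch ((n : ℝ) + 1) n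
        * (F11 n (2 * (n : ℝ) - 1) (b₁ - b₂) / F11 n (2 * (n : ℝ)) (b₁ - b₂))
      + (2 * (n : ℝ) + 1)
        * (F11 (n + 1) (2 * (n : ℝ) + 1) (b₁ - b₂) / F11 n (2 * (n : ℝ)) (b₁ - b₂))
      + b₂
    = 2 * (n : ℝ) + 1 + b₂ := by
  rcases Nat.eq_zero_or_pos n with rfl | hn
  · simp only [Nat.cast_zero, F11, poch] at *
    norm_num [Finset.sum_range_succ] at *
    ring
  · have hn0 : (n:ℝ) ≠ 0 := by positivity
    have h1 : poch (n:ℝ) (n+1) = poch (n:ℝ) n * ((n:ℝ) + n) := poch_succ _ _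
    have h2 : poch (n:ℝ) (n+1) = (n:ℝ) * poch ((n:ℝ)+1) n := poch_succ' _ _
    have hhalf : poch ((n:ℝ)+1) n = 2 * poch (n:ℝ) n := by
      apply mul_left_cancel₀ hn0
      linear_combination h1 - h2
    have hpn : poch (n:ℝ) n ≠ 0 := ne_of_gt (poch_pos _ _ (by positivity))
    have K := key n hn (b₁ - b₂)
    rw [hhalf]
    have e : poch (n:ℝ) n * (b₂ - b₁) / (2 * poch (n:ℝ) n) = (b₂ - b₁) / 2 := by
      field_simp
    rw [e]
    field_simp
    linear_combination 2 * K
end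

section
/- For all n ∈ ℕ and real α₁, α₂ with all relevant quantities defined, the multiple Laguerre of first kind bidiagonal entries a_{6n+1} = α₁+1+n, a_{6n+2} = α₂-α₁+n, a_{6n+3} = α₁-α₂+n+1, a_{6n+4} = α₂+1+n, a_{6n+5} = n+1, a_{6n+6} = n+1 satisfy all eight factorization equations: (i) a₁ = 1+α₁; (ii) a_{6n+2}+a_{6n+3}+a_{6n+4} = 3n+2+α₂; (iii) a_{6n+5}+a_{6n+6}+a_{6n+7} = 3(n+1)+1+α₁; (iv) a₁(a₂+a₃) = α₁+1; (v) a_{6n+3}a_{6n+5}+a_{6n+4}(a_{6n+5}+a_{6n+6}) = 3(n+1)²+(n+1)(α₁+α₂); (vi) a_{6n+6}a_{6n+8}+a_{6n+7}(a_{6n+8}+a_{6n+9}) = 3(n+1)²+(n+1)(α₁+α₂+3)+α₁+1; (vii) a_{6n+1}a_{6n+3}a_{6n+5} = (n+1)(n+1+α₁)(n+1+α₁-α₂); (viii) a_{6n+4}a_{6n+6}a_{6n+8} = (n+1)(n+1+α₂)(n+1+α₂-α₁). -/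
theorem laguerre_first_kind_factorization_equations (α₁ α₂ : ℝ) (a : ℕ → ℝ)
    (ha1 : ∀ n : ℕ, a (6 * n + 1) = α₁ + 1 + n)
    (ha2 : ∀ n : ℕ, a (6 * n + 2) = α₂ - α₁ + n)
    (ha3 : ∀ n : ℕ, a (6 * n + 3) = α₁ - α₂ + n + 1)
    (ha4 : ∀ n : ℕ, a (6 * n + 4) = α₂ + 1 + n)
    (ha5 : ∀ n : ℕ, a (6 * n + 5) = (n : ℝ) + 1)
    (ha6 : ∀ n : ℕ, a (6 * n + 6) = (n : ℝ) + 1) :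
    a 1 = 1 + α₁ ∧
    (∀ n : ℕ, a (6 * n + 2) + a (6 * n + 3) + a (6 * n + 4) = 3 * n + 2 + α₂) ∧
    (∀ n : ℕ, a (6 * n + 5) + a (6 * n + 6) + a (6 * n + 7) = 3 * ((n : ℝ) + 1) + 1 + α₁) ∧
    a 1 * (a 2 + a 3) = α₁ + 1 ∧
    (∀ n : ℕ, a (6 * n + 3) * a (6 * n + 5) + a (6 * n + 4) * (a (6 * n + 5) + a (6 * n + 6))
      = 3 * ((n : ℝ) + 1) ^ 2 + ((n : ℝ) + 1) * (α₁ + α₂)) ∧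
    (∀ n : ℕ, a (6 * n + 6) * a (6 * n + 8) + a (6 * n + 7) * (a (6 * n + 8) + a (6 * n + 9))
      = 3 * ((n : ℝ) + 1) ^ 2 + ((n : ℝ) + 1) * (α₁ + α₂ + 3) + α₁ + 1) ∧
    (∀ n : ℕ, a (6 * n + 1) * a (6 * n + 3) * a (6 * n + 5)
      = ((n : ℝ) + 1) * ((n : ℝ) + 1 + α₁) * ((n : ℝ) + 1 + α₁ - α₂)) ∧
    (∀ n : ℕ, a (6 * n + 4) * a (6 * n + 6) * a (6 * n + 8)
      = ((n : ℝ) + 1) * ((n : ℝ) + 1 + α₂) * ((n : ℝ) + 1 + α₂ - α₁)) := by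
  have h7 : ∀ n : ℕ, a (6 * n + 7) = α₁ + 1 + (n + 1 : ℕ) := fun n => by
    have := ha1 (n + 1); rw [show 6 * (n + 1) + 1 = 6 * n + 7 by ring] at this; exact this
  have h8 : ∀ n : ℕ, a (6 * n + 8) = α₂ - α₁ + (n + 1 : ℕ) := fun n => by
    have := ha2 (n + 1); rw [show 6 * (n + 1) + 2 = 6 * n + 8 by ring] at this; exact this
  have h9 : ∀ n : ℕ, a (6 * n + 9) = α₁ - α₂ + (n + 1 : ℕ) + 1 := fun n => by
    have := ha3 (n + 1); rw [show 6 * (n + 1) + 3 = 6 * n + 9 by ring] at this; exact this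
  refine ⟨?_, ?_, ?_, ?_, ?_, ?_, ?_, ?_⟩
  · have := ha1 0; norm_num at this; linarith
  · intro n; rw [ha2, ha3, ha4]; ring
  · intro n; rw [ha5, ha6, h7]; push_cast; ring
  · have h1 := ha1 0; have h2 := ha2 0; have h3 := ha3 0
    simp only [Nat.mul_zero, Nat.zero_add, Nat.cast_zero] at h1 h2 h3
    rw [show (1:ℕ) = 6*0+1 from rfl, show (2:ℕ) = 6*0+2 from rfl,
      show (3:ℕ) = 6*0+3 from rfl] at *
    rw [h1, h2, h3]; ring
  · intro n; rw [ha3, ha4, ha5, ha6]; ring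
  · intro n; rw [ha6, h7, h8, h9]; push_cast; ring
  · intro n; rw [ha1, ha3, ha5]; ring
  · intro n; rw [ha4, ha6, h8]; push_cast; ring
end

section
/- The multiple Laguerre of first kind recurrence coefficients arise as limits of the Jacobi–Piñeiro ones: for each fixed m ∈ ℕ and α₁, α₂ > -1, lim_{β→∞} β·b_{2m}(α₁,α₂,β) = 3m+1+α₁, lim_{β→∞} β·b_{2m+1}(α₁,α₂,β) = 3m+2+α₂, lim_{β→∞} β³·d_{2m}(α₁,α₂,β) = m(m+α₁)(m+α₁-α₂), and lim_{β→∞} β³·d_{2m+1}(α₁,α₂,β) = m(m+α₂)(m+α₂-α₁), where b, d are the explicit Jacobi–Piñeiro rational expressions. -/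
open Filter

/-- Auxiliary function `A(n₁,n₂)` for the Jacobi–Piñeiro recursion
(the Hahn `A` with the `N`-factor removed). -/
noncomputable def JPA (α₁ α₂ β n₁ n₂ : ℝ) : ℝ :=
  n₁ * (n₁ + n₂ + α₂ + β) * (n₁ + n₂ + β)
    / ((n₁ + 2 * n₂ + α₂ + β) * (2 * n₁ + n₂ + α₁ + β) * (2 * n₁ + n₂ + α₁ + β + 1))

/-- Auxiliary function `B(n₁,n₂)` for the Jacobi–Piñeiro recursion. -/
noncomputable def JPB (α₁ α₂ β n₁ n₂ : ℝ) : ℝ :=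
  (n₁ + α₁ - α₂) * (n₁ + n₂ + α₁ + β) * (n₁ + n₂ + β - 1)
    / ((n₁ + 2 * n₂ + α₂ + β - 1) * (2 * n₁ + n₂ + α₁ + β) * (2 * n₁ + n₂ + α₁ + β - 1))

/-- Auxiliary function `C(n₁,n₂)` for the Jacobi–Piñeiro recursion. -/
noncomputable def JPC (α₁ α₂ β n₁ n₂ : ℝ) : ℝ :=
  (n₁ + α₁) * (n₁ + n₂ + α₁ + β - 1) * (n₁ + n₂ + α₂ + β - 1)
    / ((n₁ + 2 * n₂ + α₂ + β - 2) * (2 * n₁ + n₂ + α₁ + β - 2) * (2 * n₁ + n₂ + α₁ + β - 1))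

/-- Jacobi–Piñeiro recursion coefficient `b_{2m}`. -/
noncomputable def JPb2 (α₁ α₂ β : ℝ) (m : ℕ) : ℝ :=
  JPA α₁ α₂ β m m + JPA α₂ (α₁ + 1) β m m + JPC α₁ α₂ β (m + 1) (m + 1)

/-- Jacobi–Piñeiro recursion coefficient `b_{2m+1}`. -/
noncomputable def JPb2p1 (α₁ α₂ β : ℝ) (m : ℕ) : ℝ :=
  JPA α₂ α₁ β m (m + 1) + JPA α₁ (α₂ + 1) β (m + 1) m + JPC α₂ α₁ β (m + 1) (m + 2)

/-- Jacobi–Piñeiro recursion coefficient `d_{2m}`. -/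
noncomputable def JPd2 (α₁ α₂ β : ℝ) (m : ℕ) : ℝ :=
  JPA α₁ α₂ β m m * JPB α₁ α₂ β m m * JPC α₁ α₂ β m m

/-- Jacobi–Piñeiro recursion coefficient `d_{2m+1}`. -/
noncomputable def JPd2p1 (α₁ α₂ β : ℝ) (m : ℕ) : ℝ :=
  JPA α₂ α₁ β m (m + 1) * JPB α₂ α₁ β m (m + 1) * JPC α₂ α₁ β m (m + 1)

section Aux

lemma tendsto_shift_div (b d : ℝ) :
    Tendsto (fun β : ℝ => (b + β) / (d + β)) atTop (nhds 1) := by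
  have hd : Tendsto (fun β : ℝ => d + β) atTop atTop :=
    tendsto_atTop_add_const_left atTop d tendsto_id
  have h0 : Tendsto (fun β : ℝ => (b - d) * (d + β)⁻¹) atTop (nhds 0) := by
    have := (tendsto_inv_atTop_zero.comp hd).const_mul (b - d)
    simpa using this
  have h1 : Tendsto (fun β : ℝ => 1 + (b - d) * (d + β)⁻¹) atTop (nhds 1) := by
    simpa using (tendsto_const_nhds (x := (1:ℝ)) (f := atTop)).add h0
  refine h1.congr' ?_
  filter_upwards [hd.eventually_gt_atTop 0] with β hβ
  field_simp
  ring

lemma key_s9 (a b c d e f : ℝ) :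
    Tendsto (fun β : ℝ => β * (a * (b + β) * (c + β) / ((d + β) * (e + β) * (f + β))))
      atTop (nhds a) := by
  have h1 := tendsto_shift_div b d
  have h2 := tendsto_shift_div c e
  have h3 := tendsto_shift_div 0 f
  simp only [zero_add] at h3
  have H : Tendsto (fun β : ℝ => a * ((b + β) / (d + β)) * ((c + β) / (e + β)) * (β / (f + β)))
      atTop (nhds a) := by
    have := (((tendsto_const_nhds (x := a) (f := atTop)).mul h1).mul h2).mul h3
    simpa using this
  refine H.congr' ?_
  have hd : Tendsto (fun β : ℝ => d + β) atTop atTop :=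
    tendsto_atTop_add_const_left atTop d tendsto_id
  have he : Tendsto (fun β : ℝ => e + β) atTop atTop :=
    tendsto_atTop_add_const_left atTop e tendsto_id
  have hf : Tendsto (fun β : ℝ => f + β) atTop atTop :=
    tendsto_atTop_add_const_left atTop f tendsto_id
  filter_upwards [hd.eventually_gt_atTop 0, he.eventually_gt_atTop 0,
    hf.eventually_gt_atTop 0] with β hd' he' hf'
  field_simp

lemma tendstoA (α₁ α₂ n₁ n₂ : ℝ) :
    Tendsto (fun β : ℝ => β * JPA α₁ α₂ β n₁ n₂) atTop (nhds n₁) := by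
  refine (key_s9 n₁ (n₁ + n₂ + α₂) (n₁ + n₂) (n₁ + 2 * n₂ + α₂) (2 * n₁ + n₂ + α₁)
    (2 * n₁ + n₂ + α₁ + 1)).congr fun β => ?_
  simp only [JPA]; ring

lemma tendstoB (α₁ α₂ n₁ n₂ : ℝ) :
    Tendsto (fun β : ℝ => β * JPB α₁ α₂ β n₁ n₂) atTop (nhds (n₁ + α₁ - α₂)) := by
  refine (key_s9 (n₁ + α₁ - α₂) (n₁ + n₂ + α₁) (n₁ + n₂ - 1) (n₁ + 2 * n₂ + α₂ - 1)
    (2 * n₁ + n₂ + α₁) (2 * n₁ + n₂ + α₁ - 1)).congr fun β => ?_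
  simp only [JPB]; ring

lemma tendstoC (α₁ α₂ n₁ n₂ : ℝ) :
    Tendsto (fun β : ℝ => β * JPC α₁ α₂ β n₁ n₂) atTop (nhds (n₁ + α₁)) := by
  refine (key_s9 (n₁ + α₁) (n₁ + n₂ + α₁ - 1) (n₁ + n₂ + α₂ - 1) (n₁ + 2 * n₂ + α₂ - 2)
    (2 * n₁ + n₂ + α₁ - 2) (2 * n₁ + n₂ + α₁ - 1)).congr fun β => ?_
  simp only [JPC]; ring

end Aux

theorem laguerre_first_kind_as_limit_of_jacobi_pineiro (m : ℕ) (α₁ α₂ : ℝ)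
    (hα₁ : α₁ > -1) (hα₂ : α₂ > -1) :
    Tendsto (fun β : ℝ => β * JPb2 α₁ α₂ β m) atTop (nhds (3 * (m : ℝ) + 1 + α₁)) ∧
    Tendsto (fun β : ℝ => β * JPb2p1 α₁ α₂ β m) atTop (nhds (3 * (m : ℝ) + 2 + α₂)) ∧
    Tendsto (fun β : ℝ => β ^ 3 * JPd2 α₁ α₂ β m) atTop
      (nhds ((m : ℝ) * ((m : ℝ) + α₁) * ((m : ℝ) + α₁ - α₂))) ∧
    Tendsto (fun β : ℝ => β ^ 3 * JPd2p1 α₁ α₂ β m) atTop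
      (nhds ((m : ℝ) * ((m : ℝ) + α₂) * ((m : ℝ) + α₂ - α₁))) := by
  refine ⟨?_, ?_, ?_, ?_⟩
  · have h := ((tendstoA α₁ α₂ m m).add (tendstoA α₂ (α₁ + 1) m m)).add
      (tendstoC α₁ α₂ (m + 1) (m + 1))
    have h' : Tendsto (fun β : ℝ => β * JPb2 α₁ α₂ β m) atTop
        (nhds ((m : ℝ) + (m : ℝ) + ((m : ℝ) + 1 + α₁))) := by
      refine h.congr fun β => ?_
      simp only [JPb2]; push_cast; ring
    convert h' using 2; push_cast; ring
  · have h := ((tendstoA α₂ α₁ m (m + 1)).add (tendstoA α₁ (α₂ + 1) (m + 1) m)).add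
      (tendstoC α₂ α₁ (m + 1) (m + 2))
    have h' : Tendsto (fun β : ℝ => β * JPb2p1 α₁ α₂ β m) atTop
        (nhds ((m : ℝ) + ((m : ℝ) + 1) + ((m : ℝ) + 1 + α₂))) := by
      refine h.congr fun β => ?_
      simp only [JPb2p1]; push_cast; ring
    convert h' using 2; push_cast; ring
  · have h := ((tendstoA α₁ α₂ m m).mul (tendstoB α₁ α₂ m m)).mul (tendstoC α₁ α₂ m m)
    have h' : Tendsto (fun β : ℝ => β ^ 3 * JPd2 α₁ α₂ β m) atTop
        (nhds ((m : ℝ) * ((m : ℝ) + α₁ - α₂) * ((m : ℝ) + α₁))) := by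
      refine h.congr fun β => ?_
      simp only [JPd2]; push_cast; ring
    convert h' using 2; ring
  · have h := ((tendstoA α₂ α₁ m (m + 1)).mul (tendstoB α₂ α₁ m (m + 1))).mul
      (tendstoC α₂ α₁ m (m + 1))
    have h' : Tendsto (fun β : ℝ => β ^ 3 * JPd2p1 α₁ α₂ β m) atTop
        (nhds ((m : ℝ) * ((m : ℝ) + α₂ - α₁) * ((m : ℝ) + α₂))) := by
      refine h.congr fun β => ?_
      simp only [JPd2p1]; push_cast; ring
    convert h' using 2; ring
end

section
/- For real parameters α₁, α₂, β > -1 and integers n, N with 0 ≤ 2n ≤ N, and with the semi-band condition -1 < α₁ - α₂ < 0, the terminating hypergeometric value ₃F₂(-n, -N, α₂-α₁-n; -2n, α₂+β+n+2; 1) = Σ_{k=0}^{n} ((-n)_k(-N)_k(α₂-α₁-n)_k)/((-2n)_k(α₂+β+n+2)_k·k!) is strictly positive; indeed every summand is nonnegative and the k = 0 term equals 1. -/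
open Finset

lemma poch_pos_of_pos {x : ℝ} (hx : 0 < x) (k : ℕ) : 0 < poch x k := by
  apply Finset.prod_pos
  intro i _
  positivity

lemma poch_neg_sign {x : ℝ} {k : ℕ} (h : ∀ i : ℕ, i < k → x + i < 0) :
    0 < (-1 : ℝ) ^ k * poch x k := by
  have : (-1 : ℝ) ^ k * poch x k = ∏ i ∈ Finset.range k, (-(x + i)) := by
    calc (-1 : ℝ) ^ k * poch x k = ∏ i ∈ Finset.range k, ((-1) * (x + i)) := by
          rw [poch, Finset.prod_mul_distrib, Finset.prod_const, Finset.card_range]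
      _ = ∏ i ∈ Finset.range k, (-(x + i)) := by simp
  rw [this]
  apply Finset.prod_pos
  intro i hi
  have := h i (Finset.mem_range.mp hi)
  linarith

theorem hahn_hypergeometric_positivity (n N : ℕ) (hN : 2 * n ≤ N)
    (α₁ α₂ β : ℝ) (hα₁ : α₁ > -1) (hα₂ : α₂ > -1) (hβ : β > -1)
    (hlow : -1 < α₁ - α₂) (hhigh : α₁ - α₂ < 0) :
    0 < ∑ k ∈ Finset.range (n + 1),
        poch (-(n : ℝ)) k * poch (-(N : ℝ)) k * poch (α₂ - α₁ - n) k
          / (poch (-(2 * (n : ℝ))) k * poch (α₂ + β + n + 2) k * (Nat.factorial k)) ∧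
    (∀ k ≤ n,
      0 ≤ poch (-(n : ℝ)) k * poch (-(N : ℝ)) k * poch (α₂ - α₁ - n) k
          / (poch (-(2 * (n : ℝ))) k * poch (α₂ + β + n + 2) k * (Nat.factorial k))) ∧
    poch (-(n : ℝ)) 0 * poch (-(N : ℝ)) 0 * poch (α₂ - α₁ - n) 0
        / (poch (-(2 * (n : ℝ))) 0 * poch (α₂ + β + n + 2) 0 * (Nat.factorial 0)) = 1 := by
  have hterm0 : poch (-(n : ℝ)) 0 * poch (-(N : ℝ)) 0 * poch (α₂ - α₁ - n) 0
        / (poch (-(2 * (n : ℝ))) 0 * poch (α₂ + β + n + 2) 0 * (Nat.factorial 0)) = 1 := by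
    simp [poch_zero]
  have hnonneg : ∀ k ≤ n,
      0 ≤ poch (-(n : ℝ)) k * poch (-(N : ℝ)) k * poch (α₂ - α₁ - n) k
          / (poch (-(2 * (n : ℝ))) k * poch (α₂ + β + n + 2) k * (Nat.factorial k)) := by
    intro k hk
    have hkn : k ≤ n := hk
    have hnN : n ≤ N := by omega
    have hA : 0 < (-1 : ℝ) ^ k * poch (-(n : ℝ)) k := by
      apply poch_neg_sign
      intro i hi
      have : (i : ℝ) < n := by exact_mod_cast lt_of_lt_of_le hi hkn
      linarith
    have hB : 0 < (-1 : ℝ) ^ k * poch (-(N : ℝ)) k := by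
      apply poch_neg_sign
      intro i hi
      have : (i : ℝ) < N := by exact_mod_cast lt_of_lt_of_le hi (hkn.trans hnN)
      linarith
    have hC : 0 < (-1 : ℝ) ^ k * poch (α₂ - α₁ - n) k := by
      apply poch_neg_sign
      intro i hi
      have hin : i < n := lt_of_lt_of_le hi hkn
      have : (i : ℝ) + 1 ≤ n := by exact_mod_cast hin
      linarith
    have hD : 0 < (-1 : ℝ) ^ k * poch (-(2 * (n : ℝ))) k := by
      apply poch_neg_sign
      intro i hi
      have hin : i < n := lt_of_lt_of_le hi hkn
      have h1 : (i : ℝ) < n := by exact_mod_cast hin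
      have h2 : (0 : ℝ) ≤ n := Nat.cast_nonneg n
      linarith
    have hE : 0 < poch (α₂ + β + n + 2) k := by
      apply poch_pos_of_pos
      have h2 : (0 : ℝ) ≤ n := Nat.cast_nonneg n
      linarith
    have hF : (0 : ℝ) < (Nat.factorial k : ℝ) := by
      exact_mod_cast Nat.factorial_pos k
    set s : ℝ := (-1 : ℝ) ^ k with hs
    have hss : s * s = 1 := by
      simp [hs, ← pow_add, ← two_mul, pow_mul]
    have hsne : s ≠ 0 := by
      intro h
      rw [h] at hss; simp at hss
    set a := s * poch (-(n : ℝ)) k with ha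
    set b := s * poch (-(N : ℝ)) k with hb
    set c := s * poch (α₂ - α₁ - n) k with hc
    set d := s * poch (-(2 * (n : ℝ))) k with hd
    have hpa : poch (-(n : ℝ)) k = s * a := by rw [ha, ← mul_assoc, hss, one_mul]
    have hpb : poch (-(N : ℝ)) k = s * b := by rw [hb, ← mul_assoc, hss, one_mul]
    have hpc : poch (α₂ - α₁ - n) k = s * c := by rw [hc, ← mul_assoc, hss, one_mul]
    have hpd : poch (-(2 * (n : ℝ))) k = s * d := by rw [hd, ← mul_assoc, hss, one_mul]
    rw [hpa, hpb, hpc, hpd]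
    have hnum : s * a * (s * b) * (s * c) = s * (a * b * c) := by
      rw [show s * a * (s * b) * (s * c) = s * s * (s * (a * b * c)) by ring, hss, one_mul]
    rw [hnum, show s * d * poch (α₂ + β + n + 2) k * ↑(Nat.factorial k)
        = s * (d * poch (α₂ + β + n + 2) k * ↑(Nat.factorial k)) by ring,
      mul_div_mul_left _ _ hsne]
    apply div_nonneg
    · positivity
    · positivity
  refine ⟨?_, hnonneg, hterm0⟩
  have h0mem : (0 : ℕ) ∈ Finset.range (n + 1) := by simp
  calc (0 : ℝ) < 1 := one_pos
    _ = poch (-(n : ℝ)) 0 * poch (-(N : ℝ)) 0 * poch (α₂ - α₁ - n) 0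
        / (poch (-(2 * (n : ℝ))) 0 * poch (α₂ + β + n + 2) 0 * (Nat.factorial 0)) := hterm0.symm
    _ ≤ _ := by
        apply Finset.single_le_sum (f := fun k => poch (-(n : ℝ)) k * poch (-(N : ℝ)) k * poch (α₂ - α₁ - n) k
          / (poch (-(2 * (n : ℝ))) k * poch (α₂ + β + n + 2) k * (Nat.factorial k))) ?_ h0mem
        intro i hi
        exact hnonneg i (by simpa using Nat.lt_succ_iff.mp (Finset.mem_range.mp hi))
end

section
/- For real β > 0, 0 < c₁, c₂ < 1 with c₁ ≠ c₂, and every n ≥ 1, the multiple Meixner first-kind second-subdiagonal coefficients d_{2n} = n(β+2n-2)(β+2n-1)c₁(c₁-c₂)/((1-c₁)³(1-c₂)) and d_{2n+1} = n(β+2n-1)(β+2n)c₂(c₂-c₁)/((1-c₁)(1-c₂)³) have opposite signs; hence the Meixner first-kind recurrence matrix is never nonnegative and cannot admit a positive bidiagonal factorization. -/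
theorem meixner_first_kind_no_PBF (β c₁ c₂ : ℝ) (hβ : β > 0)
    (hc₁0 : 0 < c₁) (hc₁1 : c₁ < 1) (hc₂0 : 0 < c₂) (hc₂1 : c₂ < 1) (hne : c₁ ≠ c₂)
    (n : ℕ) (hn : 1 ≤ n) :
    ((n : ℝ) * (β + 2 * n - 2) * (β + 2 * n - 1) * c₁ * (c₁ - c₂)
        / ((1 - c₁) ^ 3 * (1 - c₂)))
      * ((n : ℝ) * (β + 2 * n - 1) * (β + 2 * n) * c₂ * (c₂ - c₁)
        / ((1 - c₁) * (1 - c₂) ^ 3))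
      < 0 := by
  have hn1 : (1 : ℝ) ≤ (n : ℝ) := by exact_mod_cast hn
  have h1 : 0 < β + 2 * n - 2 := by nlinarith
  have h2 : 0 < β + 2 * n - 1 := by nlinarith
  have h3 : 0 < β + 2 * n := by nlinarith
  have hd1 : 0 < 1 - c₁ := by linarith
  have hd2 : 0 < 1 - c₂ := by linarith
  have hA : 0 < (n : ℝ) * (β + 2 * n - 2) * (β + 2 * n - 1) * c₁
      / ((1 - c₁) ^ 3 * (1 - c₂)) := by positivity
  have hB : 0 < (n : ℝ) * (β + 2 * n - 1) * (β + 2 * n) * c₂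
      / ((1 - c₁) * (1 - c₂) ^ 3) := by positivity
  have hsq : 0 < (c₁ - c₂) ^ 2 := by
    have : c₁ - c₂ ≠ 0 := sub_ne_zero.mpr hne
    positivity
  have key : ((n : ℝ) * (β + 2 * n - 2) * (β + 2 * n - 1) * c₁ * (c₁ - c₂)
        / ((1 - c₁) ^ 3 * (1 - c₂)))
      * ((n : ℝ) * (β + 2 * n - 1) * (β + 2 * n) * c₂ * (c₂ - c₁)
        / ((1 - c₁) * (1 - c₂) ^ 3))
      = -(((n : ℝ) * (β + 2 * n - 2) * (β + 2 * n - 1) * c₁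
            / ((1 - c₁) ^ 3 * (1 - c₂)))
        * ((n : ℝ) * (β + 2 * n - 1) * (β + 2 * n) * c₂
            / ((1 - c₁) * (1 - c₂) ^ 3))
        * (c₁ - c₂) ^ 2) := by
    field_simp
    ring
  rw [key]
  have := mul_pos (mul_pos hA hB) hsq
  linarith
end
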